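/- arXiv:2209.05847 — 3 statements merged into one kernel-verified Lean document; each statement's English description precedes it below -/
import Mathlib

section
/- Let k be a field, A a commutative k-algebra, and d ≥ 1 an odd integer. Then the cokernel of the map ∂_d : A^{⊗(d+2)} → A ⊗_k A (the (d+1)-st differential of the higher Hochschild complex of the d-sphere) is isomorphic, as an A-module, to the module of Kähler differentials Ω¹_{A/k}; the isomorphism is induced by the A-linear map A ⊗_k A → Ω¹_{A/k} sending a ⊗ x to a·dx. -/
open TensorProduct

/-- Let `k` be a field, `A` a commutative `k`-algebra and `d ≥ 1` odd.
If `dd` is the `(d+1)`-st differential of the higher Hochschild complex of the `d`-sphere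
(the unique `k`-linear map `A^{⊗(d+2)} → A ⊗[k] A` satisfying the explicit formula below on
pure tensors), then the cokernel of `dd` is isomorphic as an `A`-module to the module of
Kähler differentials `Ω¹_{A/k}`, via the map induced by `a ⊗ x ↦ a • d x`. -/
theorem stmt_0 (k : Type*) [Field k] (A : Type*) [CommRing A] [Algebra k A]
    (d : ℕ) (hd : 1 ≤ d) (hodd : Odd d)
    (dd : PiTensorProduct k (fun _ : Fin (d + 2) => A) →ₗ[k] A ⊗[k] A)
    (hdd : ∀ (a : A) (x : Fin (d + 1) → A),
      dd (PiTensorProduct.tprod k (Fin.cons a x)) =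
        (a * ∏ j ∈ Finset.univ.erase 0, x j) ⊗ₜ[k] x 0 +
        ∑ i : Fin d,
          ((-1 : A) ^ ((i : ℕ) + 1) *
              (a * ∏ j ∈ (Finset.univ.erase i.castSucc).erase i.succ, x j)) ⊗ₜ[k]
            (x i.castSucc * x i.succ) +
        ((-1 : A) ^ (d + 1) * (a * ∏ j ∈ Finset.univ.erase (Fin.last d), x j)) ⊗ₜ[k]
          x (Fin.last d)) :
    ∃ e : ((A ⊗[k] A) ⧸ Submodule.span A (Set.range dd)) ≃ₗ[A] KaehlerDifferential k A,
      ∀ (a x : A),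
        e (Submodule.Quotient.mk (a ⊗ₜ[k] x)) = a • KaehlerDifferential.D k A x := by
  classical
  set D := KaehlerDifferential.D k A with hD
  set R := Submodule.span A (Set.range dd) with hR
  let b : A →ₗ[A] A →ₗ[k] (Ω[A⁄k]) :=
    { toFun := fun a => a • (D.toLinearMap.restrictScalars k)
      map_add' := fun x y => by simp [add_smul]
      map_smul' := fun r x => by simp [mul_smul] }
  let φ : A ⊗[k] A →ₗ[A] (Ω[A⁄k]) := TensorProduct.AlgebraTensorModule.lift b
  have hφ : ∀ a x : A, φ (a ⊗ₜ[k] x) = a • D x := fun a x => by simp [φ, b]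
  -- key vanishing
  have key : ∀ (a : A) (x : Fin (d + 1) → A),
      φ (dd (PiTensorProduct.tprod k (Fin.cons a x))) = 0 := by
    intro a x
    rw [hdd]
    set T : Fin (d + 1) → (Ω[A⁄k]) := fun j =>
      ((-1 : A) ^ (j : ℕ) * (a * ∏ m ∈ Finset.univ.erase j, x m)) • D (x j) with hT
    have h1 : φ ((a * ∏ j ∈ Finset.univ.erase 0, x j) ⊗ₜ[k] x 0) = T 0 := by
      rw [hφ, hT]; simp
    have h2 : ∀ i : Fin d,
        φ (((-1 : A) ^ ((i : ℕ) + 1) *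
            (a * ∏ j ∈ (Finset.univ.erase i.castSucc).erase i.succ, x j)) ⊗ₜ[k]
          (x i.castSucc * x i.succ)) = T i.succ - T i.castSucc := by
      intro i
      have hne : i.castSucc ≠ i.succ := (Fin.castSucc_lt_succ : i.castSucc < i.succ).ne
      have hcs : x i.castSucc * ∏ j ∈ (Finset.univ.erase i.castSucc).erase i.succ, x j
          = ∏ j ∈ Finset.univ.erase i.succ, x j := by
        rw [Finset.erase_right_comm]
        exact Finset.mul_prod_erase _ x (by simp [Finset.mem_erase, hne])
      have hsc : x i.succ * ∏ j ∈ (Finset.univ.erase i.castSucc).erase i.succ, x j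
          = ∏ j ∈ Finset.univ.erase i.castSucc, x j := by
        exact Finset.mul_prod_erase _ x (by simp [Finset.mem_erase, hne.symm])
      rw [hφ, Derivation.leibniz, smul_add, smul_smul, smul_smul, hT]
      have e1 : (-1 : A) ^ ((i : ℕ) + 1) *
          (a * ∏ j ∈ (Finset.univ.erase i.castSucc).erase i.succ, x j) * x i.castSucc
          = (-1 : A) ^ ((i.succ : ℕ)) * (a * ∏ m ∈ Finset.univ.erase i.succ, x m) := by
        rw [Fin.val_succ, ← hcs]; ring
      have e2 : (-1 : A) ^ ((i : ℕ) + 1) *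
          (a * ∏ j ∈ (Finset.univ.erase i.castSucc).erase i.succ, x j) * x i.succ
          = -((-1 : A) ^ ((i.castSucc : ℕ)) * (a * ∏ m ∈ Finset.univ.erase i.castSucc, x m)) := by
        rw [Fin.coe_castSucc, ← hsc, pow_succ]; ring
      rw [e1, e2, neg_smul, sub_eq_add_neg]
    have h3 : φ (((-1 : A) ^ (d + 1) * (a * ∏ j ∈ Finset.univ.erase (Fin.last d), x j)) ⊗ₜ[k]
        x (Fin.last d)) = -(T (Fin.last d)) := by
      rw [hφ, hT]
      have : (-1 : A) ^ (d + 1) * (a * ∏ j ∈ Finset.univ.erase (Fin.last d), x j)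
          = -((-1 : A) ^ ((Fin.last d : ℕ)) * (a * ∏ m ∈ Finset.univ.erase (Fin.last d), x m)) := by
        rw [Fin.val_last, pow_succ]; ring
      rw [this, neg_smul]
    rw [map_add, map_add, map_sum, h1, h3]
    rw [Finset.sum_congr rfl fun i _ => h2 i]
    rw [Finset.sum_sub_distrib]
    have hs1 : ∑ i : Fin d, T i.succ = (∑ j : Fin (d + 1), T j) - T 0 := by
      rw [Fin.sum_univ_succ]; abel
    have hs2 : ∑ i : Fin d, T i.castSucc = (∑ j : Fin (d + 1), T j) - T (Fin.last d) := by
      rw [Fin.sum_univ_castSucc]; abel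
    rw [hs1, hs2]; abel

  -- the span of the range of dd is contained in ker φ
  have hker : R ≤ LinearMap.ker φ := by
    rw [hR, Submodule.span_le]
    rintro _ ⟨t, rfl⟩
    simp only [SetLike.mem_coe, LinearMap.mem_ker]
    induction t using PiTensorProduct.induction_on with
    | smul_tprod r f =>
        rw [map_smul, LinearMap.map_smul_of_tower,
          show f = Fin.cons (f 0) (Fin.tail f) from (Fin.cons_self_tail f).symm,
          key, smul_zero]
    | add p q hp hq => rw [map_add, map_add, hp, hq, add_zero]
  -- the generators of the Kähler relations lie in R
  have hgen : ∀ u v : A, u ⊗ₜ[k] v + v ⊗ₜ[k] u - (1:A) ⊗ₜ[k] (u*v) ∈ R := by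
    intro u v
    rcases (show d = 1 ∨ ∃ e, Odd e ∧ d = e + 2 by
        rcases hodd with ⟨c, hc⟩
        rcases c with _ | c
        · exact Or.inl (by omega)
        · exact Or.inr ⟨2*c+1, ⟨c, rfl⟩, by omega⟩) with hd1 | ⟨e, he, hde⟩
    · subst hd1
      have mem : dd (PiTensorProduct.tprod k
          (Fin.cons 1 (fun j : Fin 2 => (if j = 0 then u else 1) * (if j = 1 then v else 1))))
          ∈ R := hR ▸ Submodule.subset_span ⟨_, rfl⟩
      rw [hdd] at mem
      have hval :
          ((1:A) * ∏ j ∈ Finset.univ.erase 0, (fun j : Fin 2 =>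
              (if j = 0 then u else 1) * (if j = 1 then v else 1)) j) ⊗ₜ[k]
            ((fun j : Fin 2 => (if j = 0 then u else 1) * (if j = 1 then v else 1)) 0) +
          ∑ i : Fin 1,
            ((-1 : A) ^ ((i : ℕ) + 1) *
                ((1:A) * ∏ j ∈ (Finset.univ.erase i.castSucc).erase i.succ, (fun j : Fin 2 =>
                  (if j = 0 then u else 1) * (if j = 1 then v else 1)) j)) ⊗ₜ[k]
              ((fun j : Fin 2 => (if j = 0 then u else 1) * (if j = 1 then v else 1)) i.castSucc *
               (fun j : Fin 2 => (if j = 0 then u else 1) * (if j = 1 then v else 1)) i.succ) +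
          ((-1 : A) ^ (1 + 1) * ((1:A) * ∏ j ∈ Finset.univ.erase (Fin.last 1), (fun j : Fin 2 =>
              (if j = 0 then u else 1) * (if j = 1 then v else 1)) j)) ⊗ₜ[k]
            ((fun j : Fin 2 => (if j = 0 then u else 1) * (if j = 1 then v else 1)) (Fin.last 1))
          = u ⊗ₜ[k] v + v ⊗ₜ[k] u - (1:A) ⊗ₜ[k] (u * v) := by
        have e1 : (Finset.univ.erase (0 : Fin 2)) = {1} := by decide
        have e2 : (Finset.univ.erase (Fin.last 1) : Finset (Fin 2)) = {0} := by decide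
        have e2' : (Finset.univ.erase (1 : Fin 2)) = {0} := by decide
        have e3 : ((Finset.univ.erase (Fin.castSucc (0 : Fin 1))).erase (Fin.succ 0) : Finset (Fin 2)) = ∅ := by decide
        simp only [Fin.sum_univ_one, e3, Fin.castSucc_zero, Fin.succ_zero_eq_one, e1, e2, e2',
          Finset.prod_singleton, Finset.prod_empty, Fin.last]
        norm_num
        rw [show (Finset.univ.erase (1: Fin 2)) = {0} from by decide, Finset.prod_singleton]
        norm_num
        rw [show ((-1 : A)) ⊗ₜ[k] (u*v) = -((1:A) ⊗ₜ[k] (u*v)) from by rw [← neg_tmul]]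
        abel
      rwa [hval] at mem
    · subst hde
      set x : Fin (e+3) → A :=
        fun j => (if j = 0 then u else 1) * (if j = 1 then v else 1) with hxdef
      have mem : dd (PiTensorProduct.tprod k (Fin.cons 1 x)) ∈ R :=
        hR ▸ Submodule.subset_span ⟨_, rfl⟩
      rw [hdd] at mem
      have hval :
          ((1:A) * ∏ j ∈ Finset.univ.erase 0, x j) ⊗ₜ[k] x 0 +
          ∑ i : Fin (e+2),
            ((-1 : A) ^ ((i : ℕ) + 1) *
                ((1:A) * ∏ j ∈ (Finset.univ.erase i.castSucc).erase i.succ, x j)) ⊗ₜ[k]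
              (x i.castSucc * x i.succ) +
          ((-1 : A) ^ (e + 2 + 1) *
              ((1:A) * ∏ j ∈ Finset.univ.erase (Fin.last (e+2)), x j)) ⊗ₜ[k]
            x (Fin.last (e+2))
          = u ⊗ₜ[k] v + v ⊗ₜ[k] u - (1:A) ⊗ₜ[k] (u * v) := by
        have hxj : ∀ j, x j = (if j = 0 then u else 1) * (if j = 1 then v else 1) :=
          fun j => by rw [hxdef]
        have prodlem : ∀ s : Finset (Fin (e+3)), ∏ j ∈ s, x j =
            (if (0 : Fin (e+3)) ∈ s then u else 1) * (if (1 : Fin (e+3)) ∈ s then v else 1) := by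
          intro s
          rw [Finset.prod_congr rfl fun j _ => hxj j, Finset.prod_mul_distrib, Finset.prod_ite_eq' s 0 (fun _ => u),
            Finset.prod_ite_eq' s 1 (fun _ => v)]
        have h01 : ((1 : Fin (e+3)) : ℕ) = 1 := rfl
        have hx : ∀ j : Fin (e+3), (j : ℕ) ≠ 0 → (j : ℕ) ≠ 1 → x j = 1 := by
          intro j hj0 hj1
          rw [hxj, if_neg (fun h => hj0 (by rw [h]; rfl)), if_neg (by rw [Fin.ext_iff, h01]; exact hj1),
            mul_one]
        have hx0 : x 0 = u := by
          rw [hxj, if_pos rfl, if_neg (by simp [Fin.ext_iff, h01]), mul_one]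
        have hx1 : x 1 = v := by
          rw [hxj, if_pos rfl, if_neg (by simp [Fin.ext_iff, h01]), one_mul]
        have hmem : ∀ (s : Finset (Fin (e+3))) (j : Fin (e+3)) (c : Fin (e+3)),
            (j : ℕ) ≠ (c : ℕ) → j ∈ s → j ∈ s.erase c := by
          intro s j c h hj
          exact Finset.mem_erase.mpr ⟨by simpa [Fin.ext_iff] using h, hj⟩
        -- first term
        have hfirst : ((1:A) * ∏ j ∈ Finset.univ.erase 0, x j) ⊗ₜ[k] x 0 = v ⊗ₜ[k] u := by
          rw [prodlem, hx0, if_neg (Finset.notMem_erase _ _),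
            if_pos (hmem _ _ _ (by simp [h01]) (Finset.mem_univ _)), one_mul, one_mul]
        -- middle sum
        have hg0 : ((-1 : A) ^ (((0 : Fin (e+2)) : ℕ) + 1) *
            ((1:A) * ∏ j ∈ (Finset.univ.erase (0:Fin (e+2)).castSucc).erase (0:Fin (e+2)).succ, x j)) ⊗ₜ[k]
              (x (0:Fin (e+2)).castSucc * x (0:Fin (e+2)).succ)
            = -((1:A) ⊗ₜ[k] (u * v)) := by
          rw [Fin.castSucc_zero, Fin.succ_zero_eq_one, prodlem, hx0, hx1,
            if_neg (fun h => (Finset.notMem_erase (0 : Fin (e+3)) _) (Finset.mem_of_mem_erase h)),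
            if_neg (Finset.notMem_erase _ _), ← neg_tmul]
          norm_num
        have hg1 : ((-1 : A) ^ ((((0 : Fin (e+1)).succ : Fin (e+2)) : ℕ) + 1) *
            ((1:A) * ∏ j ∈ (Finset.univ.erase ((0:Fin (e+1)).succ : Fin (e+2)).castSucc).erase
                ((0:Fin (e+1)).succ : Fin (e+2)).succ, x j)) ⊗ₜ[k]
              (x ((0:Fin (e+1)).succ : Fin (e+2)).castSucc * x ((0:Fin (e+1)).succ : Fin (e+2)).succ)
            = u ⊗ₜ[k] v := by
          have hc : (((0:Fin (e+1)).succ : Fin (e+2)).castSucc : Fin (e+3)) = 1 := by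
            rw [Fin.succ_zero_eq_one, Fin.castSucc_one]
          have hsv : ((((0:Fin (e+1)).succ : Fin (e+2)).succ : Fin (e+3)) : ℕ) = 2 := by
            simp [Fin.val_succ]
          rw [hc, prodlem, hx1,
            hx _ (by rw [hsv]; omega) (by rw [hsv]; omega),
            if_pos (hmem _ _ _ (by rw [hsv]; simp) (hmem _ _ _ (by simp [h01]) (Finset.mem_univ _))),
            if_neg (fun h => (Finset.notMem_erase (1 : Fin (e+3)) _) (Finset.mem_of_mem_erase h))]
          norm_num
        have htail : ∀ i : Fin e, ((-1 : A) ^ (((i.succ.succ : Fin (e+2)) : ℕ) + 1) *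
            ((1:A) * ∏ j ∈ (Finset.univ.erase (i.succ.succ : Fin (e+2)).castSucc).erase
                (i.succ.succ : Fin (e+2)).succ, x j)) ⊗ₜ[k]
              (x (i.succ.succ : Fin (e+2)).castSucc * x (i.succ.succ : Fin (e+2)).succ)
            = ((-1 : A) ^ ((i : ℕ) + 3) * (u * v)) ⊗ₜ[k] (1:A) := by
          intro i
          have hcv : (((i.succ.succ : Fin (e+2)).castSucc : Fin (e+3)) : ℕ) = (i : ℕ) + 2 := by
            simp [Fin.val_succ]
          have hsv : ((((i.succ.succ : Fin (e+2)).succ : Fin (e+3))) : ℕ) = (i : ℕ) + 3 := by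
            simp [Fin.val_succ]
          have hev : (((i.succ.succ : Fin (e+2)) : ℕ)) + 1 = (i : ℕ) + 3 := by
            simp [Fin.val_succ]
          rw [hev, prodlem, hx _ (by rw [hcv]; omega) (by rw [hcv]; omega),
            hx _ (by rw [hsv]; omega) (by rw [hsv]; omega),
            if_pos (hmem _ _ _ (by rw [hsv]; simp) (hmem _ _ _ (by rw [hcv]; simp)
              (Finset.mem_univ _))),
            if_pos (hmem _ _ _ (by rw [h01, hsv]; omega) (hmem _ _ _ (by rw [h01, hcv]; omega)
              (Finset.mem_univ _)))]
          norm_num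
        have hmid : ∑ i : Fin (e+2),
            ((-1 : A) ^ ((i : ℕ) + 1) *
                ((1:A) * ∏ j ∈ (Finset.univ.erase i.castSucc).erase i.succ, x j)) ⊗ₜ[k]
              (x i.castSucc * x i.succ)
            = -((1:A) ⊗ₜ[k] (u * v)) + u ⊗ₜ[k] v + -((u * v) ⊗ₜ[k] (1:A)) := by
          rw [Fin.sum_univ_succ, Fin.sum_univ_succ, hg0]
          rw [Finset.sum_congr rfl fun i _ => htail i, hg1]
          have : ∑ i : Fin e, ((-1 : A) ^ ((i : ℕ) + 3) * (u * v)) ⊗ₜ[k] (1:A)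
              = -((u * v) ⊗ₜ[k] (1:A)) := by
            rw [← TensorProduct.sum_tmul, ← Finset.sum_mul]
            have : ∑ i : Fin e, (-1 : A) ^ ((i : ℕ) + 3) = -1 := by
              have h3 : ∀ i : Fin e, (-1 : A) ^ ((i : ℕ) + 3) = (-1 : A) ^ (i : ℕ) * (-1) ^ 3 :=
                fun i => pow_add _ _ _
              rw [Finset.sum_congr rfl fun i _ => h3 i, ← Finset.sum_mul,
                Fin.sum_univ_eq_sum_range (fun i => ((-1 : A)) ^ i), neg_one_geom_sum,
                if_neg (by simpa [Nat.not_even_iff_odd] using he)]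
              norm_num
            rw [this, neg_one_mul, neg_tmul]
          rw [this]
          abel
        -- last term
        have hlast : ((-1 : A) ^ (e + 2 + 1) *
            ((1:A) * ∏ j ∈ Finset.univ.erase (Fin.last (e+2)), x j)) ⊗ₜ[k] x (Fin.last (e+2))
            = (u * v) ⊗ₜ[k] (1:A) := by
          have hev : Even (e + 2 + 1) := by
            rcases he with ⟨c, rfl⟩; exact ⟨c + 2, by ring⟩
          have hlv : ((Fin.last (e+2) : Fin (e+3)) : ℕ) = e + 2 := Fin.val_last _
          rw [hev.neg_one_pow, hx _ (by rw [hlv]; omega) (by rw [hlv]; omega), prodlem,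
            if_pos (hmem _ _ _ (by rw [hlv]; simp) (Finset.mem_univ _)),
            if_pos (hmem _ _ _ (by rw [h01, hlv]; omega) (Finset.mem_univ _))]
          norm_num
        rw [hfirst, hmid, hlast]
        abel
      rwa [hval] at mem
  -- construct the isomorphism
  let φbar : ((A ⊗[k] A) ⧸ R) →ₗ[A] (Ω[A⁄k]) := Submodule.liftQ R φ hker
  have hone : ((1:A) ⊗ₜ[k] (1:A)) ∈ R := by
    have := hgen 1 1; simpa using this
  have hsmul : ∀ a x : A, a • ((1:A) ⊗ₜ[k] x) = a ⊗ₜ[k] x := by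
    intro a x; rw [smul_tmul', smul_eq_mul, mul_one]
  let L : A →ₗ[k] ((A ⊗[k] A) ⧸ R) :=
    (R.mkQ.restrictScalars k) ∘ₗ (TensorProduct.mk k A A 1)
  have hL : ∀ x : A, L x = Submodule.Quotient.mk ((1:A) ⊗ₜ[k] x) := fun x => rfl
  let Dq : Derivation k A ((A ⊗[k] A) ⧸ R) :=
    { toLinearMap := L
      map_one_eq_zero' := by
        rw [hL, Submodule.Quotient.mk_eq_zero]; exact hone
      leibniz' := by
        intro a b
        show Submodule.Quotient.mk ((1:A) ⊗ₜ[k] (a*b)) =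
          a • Submodule.Quotient.mk ((1:A) ⊗ₜ[k] b) + b • Submodule.Quotient.mk ((1:A) ⊗ₜ[k] a)
        rw [← Submodule.Quotient.mk_smul, ← Submodule.Quotient.mk_smul,
          ← Submodule.Quotient.mk_add, Submodule.Quotient.eq, hsmul, hsmul]
        have := neg_mem (hgen a b)
        convert this using 1
        abel }
  let ψ : (Ω[A⁄k]) →ₗ[A] ((A ⊗[k] A) ⧸ R) := Dq.liftKaehlerDifferential
  have hψ : ∀ x : A, ψ (D x) = Submodule.Quotient.mk ((1:A) ⊗ₜ[k] x) :=
    fun x => Dq.liftKaehlerDifferential_comp_D x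
  have h1 : φbar ∘ₗ ψ = LinearMap.id := by
    apply Derivation.liftKaehlerDifferential_unique
    ext x
    show φbar (ψ (KaehlerDifferential.D k A x)) = KaehlerDifferential.D k A x
    rw [← hD, hψ]
    show φ ((1:A) ⊗ₜ[k] x) = D x
    rw [hφ, one_smul]
  have h2 : ψ ∘ₗ φbar = LinearMap.id := by
    apply LinearMap.ext
    intro z
    obtain ⟨z, rfl⟩ := Submodule.mkQ_surjective R z
    show ψ (φ z) = Submodule.Quotient.mk z
    induction z with
    | zero => simp
    | tmul a y =>
        rw [hφ, map_smul, hψ, ← Submodule.Quotient.mk_smul, hsmul]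
    | add p q hp hq => rw [map_add, map_add, Submodule.Quotient.mk_add, hp, hq]
  refine ⟨LinearEquiv.ofLinear φbar ψ h1 h2, fun a y => ?_⟩
  show φbar (Submodule.Quotient.mk (a ⊗ₜ[k] y)) = a • KaehlerDifferential.D k A y
  rw [← hD]
  exact hφ a y
end

section
/- Let k be a field, A a commutative k-algebra, and d ≥ 2 an even integer. Let μ : A ⊗_k A → A be the multiplication map. Then the image of the map ∂_d : A^{⊗(d+2)} → A ⊗_k A (the (d+1)-st differential of the higher Hochschild complex of the d-sphere) is contained in ker μ, and the quotient (ker μ)/(im ∂_d) is isomorphic, as an A-module, to the module of Kähler differentials Ω¹_{A/k}; the isomorphism is induced by the map sending the class of Σ aᵢ ⊗ bᵢ ∈ ker μ to Σ aᵢ·dbᵢ. -/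
open TensorProduct

section StmtAux

variable {k : Type*} [Field k] {A : Type*} [CommRing A] [Algebra k A]

theorem aux_ker_le_span (μ : A ⊗[k] A →ₗ[A] A) (hμ : ∀ a b : A, μ (a ⊗ₜ[k] b) = a * b)
    (x : A ⊗[k] A) (hx : μ x = 0) :
    x ∈ Submodule.span A (Set.range fun b : A => (1:A) ⊗ₜ[k] b - b ⊗ₜ[k] (1:A)) := by
  have key : ∀ y : A ⊗[k] A, y - (μ y) ⊗ₜ[k] (1:A) ∈
      Submodule.span A (Set.range fun b : A => (1:A) ⊗ₜ[k] b - b ⊗ₜ[k] (1:A)) := by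
    intro y
    induction y using TensorProduct.induction_on with
    | zero => simp
    | tmul a b =>
        have h : a ⊗ₜ[k] b - (μ (a ⊗ₜ[k] b)) ⊗ₜ[k] (1:A)
            = a • ((1:A) ⊗ₜ[k] b - b ⊗ₜ[k] (1:A)) := by
          rw [hμ, smul_sub, TensorProduct.smul_tmul', TensorProduct.smul_tmul']
          simp [smul_eq_mul]
        rw [h]
        exact Submodule.smul_mem _ _ (Submodule.subset_span ⟨b, rfl⟩)
    | add u v hu hv =>
        have h : u + v - (μ (u+v)) ⊗ₜ[k] (1:A)
            = (u - μ u ⊗ₜ[k] (1:A)) + (v - μ v ⊗ₜ[k] (1:A)) := by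
          rw [map_add, TensorProduct.add_tmul]; abel
        rw [h]; exact Submodule.add_mem _ hu hv
  have h2 := key x
  rwa [hx, TensorProduct.zero_tmul, sub_zero] at h2


theorem aux_prod_double_erase (d : ℕ) (x : Fin (d+1) → A) (i : Fin d) :
    (∏ j ∈ (Finset.univ.erase i.castSucc).erase i.succ, x j) * (x i.castSucc * x i.succ)
      = ∏ j, x j := by
  have hne : i.succ ≠ i.castSucc := (Fin.castSucc_lt_succ : i.castSucc < i.succ).ne'
  have h1 : i.succ ∈ Finset.univ.erase i.castSucc :=
    Finset.mem_erase.mpr ⟨hne, Finset.mem_univ _⟩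
  rw [show x i.castSucc * x i.succ = x i.succ * x i.castSucc from mul_comm _ _, ← mul_assoc,
    Finset.prod_erase_mul _ _ h1, Finset.prod_erase_mul _ _ (Finset.mem_univ _)]

theorem aux_sum_sign (d : ℕ) (heven : Even d) :
    ∑ i : Fin d, ((-1 : A)) ^ ((i : ℕ) + 1) = 0 := by
  rw [Fin.sum_univ_eq_sum_range (fun i => ((-1:A))^(i+1))]
  have : ∀ i, ((-1:A))^(i+1) = (-1)^i * (-1) := fun i => pow_succ _ _
  rw [Finset.sum_congr rfl fun i _ => this i, ← Finset.sum_mul, neg_one_geom_sum,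
    if_pos heven, zero_mul]

theorem aux_mu_dd (d : ℕ) (heven : Even d)
    (μ : A ⊗[k] A →ₗ[A] A) (hμ : ∀ a b : A, μ (a ⊗ₜ[k] b) = a * b)
    (a : A) (x : Fin (d + 1) → A)
    (v : A ⊗[k] A)
    (hv : v =
        (a * ∏ j ∈ Finset.univ.erase 0, x j) ⊗ₜ[k] x 0 +
        ∑ i : Fin d,
          ((-1 : A) ^ ((i : ℕ) + 1) *
              (a * ∏ j ∈ (Finset.univ.erase i.castSucc).erase i.succ, x j)) ⊗ₜ[k]
            (x i.castSucc * x i.succ) +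
        ((-1 : A) ^ (d + 1) * (a * ∏ j ∈ Finset.univ.erase (Fin.last d), x j)) ⊗ₜ[k]
          x (Fin.last d)) :
    μ v = 0 := by
  rw [hv, map_add, map_add, map_sum, hμ, hμ]
  simp only [hμ]
  have h1 : (a * ∏ j ∈ Finset.univ.erase 0, x j) * x 0 = a * ∏ j, x j := by
    rw [mul_assoc, Finset.prod_erase_mul _ _ (Finset.mem_univ _)]
  have hmid : ∀ i : Fin d,
      ((-1 : A) ^ ((i : ℕ) + 1) *
          (a * ∏ j ∈ (Finset.univ.erase i.castSucc).erase i.succ, x j)) *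
        (x i.castSucc * x i.succ) = (-1:A) ^ ((i:ℕ)+1) * (a * ∏ j, x j) := by
    intro i
    rw [mul_assoc, mul_assoc, aux_prod_double_erase]
  have hlast : ((-1 : A) ^ (d + 1) * (a * ∏ j ∈ Finset.univ.erase (Fin.last d), x j)) *
      x (Fin.last d) = (-1:A)^(d+1) * (a * ∏ j, x j) := by
    rw [mul_assoc, mul_assoc, Finset.prod_erase_mul _ _ (Finset.mem_univ _)]
  rw [h1, hlast, Finset.sum_congr rfl fun i _ => hmid i, ← Finset.sum_mul,
    aux_sum_sign d heven, Odd.neg_one_pow (heven.add_one), zero_mul]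
  ring

open Fin.NatCast in
theorem aux_T_dd (d : ℕ) (heven : Even d) (a : A) (x : Fin (d + 1) → A)
    (v : A ⊗[k] A)
    (hv : v =
        (a * ∏ j ∈ Finset.univ.erase 0, x j) ⊗ₜ[k] x 0 +
        ∑ i : Fin d,
          ((-1 : A) ^ ((i : ℕ) + 1) *
              (a * ∏ j ∈ (Finset.univ.erase i.castSucc).erase i.succ, x j)) ⊗ₜ[k]
            (x i.castSucc * x i.succ) +
        ((-1 : A) ^ (d + 1) * (a * ∏ j ∈ Finset.univ.erase (Fin.last d), x j)) ⊗ₜ[k]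
          x (Fin.last d)) :
    (KaehlerDifferential.D k A).tensorProductTo v = 0 := by
  set D := KaehlerDifferential.D k A with hD
  set T := D.tensorProductTo with hT
  set P : Fin (d+1) → Ω[A⁄k] := fun m => (a * ∏ j ∈ Finset.univ.erase m, x j) • D (x m) with hP
  set F : ℕ → Ω[A⁄k] := fun n => ((-1:A))^n • P ((n : ℕ) : Fin (d+1)) with hF
  have hcast : ∀ n : ℕ, n < d + 1 → ((n : Fin (d+1)) : ℕ) = n := by
    intro n hn
    rw [Fin.val_natCast, Nat.mod_eq_of_lt hn]
  have h1 : T ((a * ∏ j ∈ Finset.univ.erase 0, x j) ⊗ₜ[k] x 0) = P 0 :=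
    Derivation.tensorProductTo_tmul _ _ _
  have hmid : ∀ i : Fin d,
      T (((-1 : A) ^ ((i : ℕ) + 1) *
            (a * ∏ j ∈ (Finset.univ.erase i.castSucc).erase i.succ, x j)) ⊗ₜ[k]
          (x i.castSucc * x i.succ)) = F ((i:ℕ) + 1) - F (i:ℕ) := by
    intro i
    rw [Derivation.tensorProductTo_tmul, Derivation.leibniz, smul_add, smul_smul, smul_smul]
    have hne : i.succ ≠ i.castSucc := (Fin.castSucc_lt_succ : i.castSucc < i.succ).ne'
    have hA : ((-1 : A) ^ ((i : ℕ) + 1) *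
          (a * ∏ j ∈ (Finset.univ.erase i.castSucc).erase i.succ, x j)) * x i.castSucc
        = (-1:A) ^ ((i:ℕ)+1) * (a * ∏ j ∈ Finset.univ.erase i.succ, x j) := by
      rw [mul_assoc, mul_assoc, Finset.erase_right_comm,
        Finset.prod_erase_mul _ _ (Finset.mem_erase.mpr ⟨hne.symm, Finset.mem_univ _⟩)]
    have hB : ((-1 : A) ^ ((i : ℕ) + 1) *
          (a * ∏ j ∈ (Finset.univ.erase i.castSucc).erase i.succ, x j)) * x i.succ
        = (-1:A) ^ ((i:ℕ)+1) * (a * ∏ j ∈ Finset.univ.erase i.castSucc, x j) := by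
      rw [mul_assoc, mul_assoc,
        Finset.prod_erase_mul _ _ (Finset.mem_erase.mpr ⟨hne, Finset.mem_univ _⟩)]
    rw [hA, hB, mul_smul ((-1:A) ^ ((i:ℕ)+1)), mul_smul ((-1:A) ^ ((i:ℕ)+1)),
      show (a * ∏ j ∈ Finset.univ.erase i.succ, x j) • D (x i.succ) = P i.succ from rfl,
      show (a * ∏ j ∈ Finset.univ.erase i.castSucc, x j) • D (x i.castSucc) = P i.castSucc
        from rfl]
    have hps : P i.succ = P (((i:ℕ) + 1 : ℕ) : Fin (d+1)) := by
      congr 1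
      ext
      rw [hcast _ (by omega), Fin.val_succ]
    have hpc : P i.castSucc = P (((i:ℕ) : ℕ) : Fin (d+1)) := by
      congr 1
      ext
      rw [hcast _ (by omega), Fin.coe_castSucc]
    have hneg : ((-1:A) ^ ((i:ℕ)+1)) • P i.castSucc = -(((-1:A) ^ (i:ℕ)) • P i.castSucc) := by
      rw [pow_succ, mul_neg_one, neg_smul]
    rw [hneg, hps, hpc]
    simp only [hF]
    abel
  have hlast : T (((-1 : A) ^ (d + 1) * (a * ∏ j ∈ Finset.univ.erase (Fin.last d), x j)) ⊗ₜ[k]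
      x (Fin.last d)) = -(P (Fin.last d)) := by
    rw [Derivation.tensorProductTo_tmul, Odd.neg_one_pow heven.add_one, neg_one_mul, neg_smul]
  rw [hv, map_add, map_add, map_sum, h1, hlast, Finset.sum_congr rfl fun i _ => hmid i,
    Fin.sum_univ_eq_sum_range (fun n => F (n+1) - F n), Finset.sum_range_sub F d]
  have hF0 : F 0 = P 0 := by
    simp only [hF]; simp
  have hFd : F d = P (Fin.last d) := by
    show ((-1:A))^d • P ((d : ℕ) : Fin (d+1)) = P (Fin.last d)
    rw [Even.neg_one_pow heven, one_smul]
    congr 1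
    ext
    rw [hcast _ (by omega)]
    rfl
  rw [hF0, hFd]
  abel

theorem aux_dd_delta (e : ℕ) (heven : Even e) (b c : A)
    (x : Fin (e + 2 + 1) → A) (hx : x = fun j => if j = 0 then b else if j = 1 then c else 1)
    (v : A ⊗[k] A)
    (hv : v =
        ((1:A) * ∏ j ∈ Finset.univ.erase 0, x j) ⊗ₜ[k] x 0 +
        ∑ i : Fin (e+2),
          ((-1 : A) ^ ((i : ℕ) + 1) *
              ((1:A) * ∏ j ∈ (Finset.univ.erase i.castSucc).erase i.succ, x j)) ⊗ₜ[k]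
            (x i.castSucc * x i.succ) +
        ((-1 : A) ^ (e + 2 + 1) * ((1:A) * ∏ j ∈ Finset.univ.erase (Fin.last (e+2)), x j)) ⊗ₜ[k]
          x (Fin.last (e+2))) :
    v = -(((1:A) ⊗ₜ[k] b - b ⊗ₜ[k] (1:A)) * ((1:A) ⊗ₜ[k] c - c ⊗ₜ[k] (1:A))) := by
  have h01 : (0 : Fin (e+2+1)) ≠ 1 := by simp [Fin.ext_iff]
  have hxval : ∀ j : Fin (e+2+1), x j = (if j = 0 then b else 1) * (if j = 1 then c else 1) := by
    intro j
    by_cases h0 : j = 0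
    · subst h0; simp [hx, h01]
    · by_cases h1 : j = 1
      · subst h1; simp [hx, h01.symm, Ne.symm h01]
      · simp [hx, h0, h1]
  have hprod : ∀ s : Finset (Fin (e+2+1)), ∏ j ∈ s, x j =
      (if (0 : Fin (e+2+1)) ∈ s then b else 1) * (if (1 : Fin (e+2+1)) ∈ s then c else 1) := by
    intro s
    rw [Finset.prod_congr rfl fun j _ => hxval j, Finset.prod_mul_distrib,
      Finset.prod_ite_eq' s (0 : Fin (e+2+1)) (fun _ => b),
      Finset.prod_ite_eq' s (1 : Fin (e+2+1)) (fun _ => c)]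
  rw [hv, Fin.sum_univ_succ, Fin.sum_univ_succ]
  -- the tail sum vanishes
  have hgen : ∀ i : Fin e,
      ((-1 : A) ^ (((i.succ.succ : Fin (e+2)) : ℕ) + 1) *
          ((1:A) * ∏ j ∈ (Finset.univ.erase (i.succ.succ : Fin (e+2)).castSucc).erase
              (i.succ.succ : Fin (e+2)).succ, x j)) ⊗ₜ[k]
        (x (i.succ.succ : Fin (e+2)).castSucc * x (i.succ.succ : Fin (e+2)).succ)
      = ((-1 : A) ^ ((i:ℕ) + 3) * (b * c)) ⊗ₜ[k] (1:A) := by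
    intro i
    have e1 : x (i.succ.succ : Fin (e+2)).castSucc = 1 := by
      rw [hxval, if_neg (by simp [Fin.ext_iff]), if_neg (by simp [Fin.ext_iff]), mul_one]
    have e2 : x (i.succ.succ : Fin (e+2)).succ = 1 := by
      rw [hxval, if_neg (by simp [Fin.ext_iff]), if_neg (by simp [Fin.ext_iff]), mul_one]
    rw [e1, e2, hprod, if_pos (by simp [Finset.mem_erase, Fin.ext_iff]),
      if_pos (by simp [Finset.mem_erase, Fin.ext_iff]), mul_one, one_mul,
      show (((i.succ.succ : Fin (e+2)) : ℕ)) = (i:ℕ) + 2 by simp [Fin.val_succ]]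
  rw [Finset.sum_congr rfl fun i _ => hgen i, ← TensorProduct.sum_tmul]
  have hzero : (∑ i : Fin e, (-1 : A) ^ ((i:ℕ) + 3) * (b * c)) = 0 := by
    rw [← Finset.sum_mul, Fin.sum_univ_eq_sum_range (fun i => ((-1:A))^(i+3))]
    have h3 : ∀ i, ((-1:A))^(i+3) = (-1)^i * (-1)^3 := fun i => pow_add _ _ _
    rw [Finset.sum_congr rfl fun i _ => h3 i, ← Finset.sum_mul, neg_one_geom_sum,
      if_pos heven, zero_mul, zero_mul]
  rw [hzero, TensorProduct.zero_tmul, add_zero]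
  -- explicit small terms
  have hx0 : x 0 = b := by rw [hxval, if_pos rfl, if_neg h01, mul_one]
  have hx1 : x (1 : Fin (e+2+1)) = c := by rw [hxval, if_neg (Ne.symm h01), if_pos rfl, one_mul]
  have hxlast : x (Fin.last (e+2)) = 1 := by
    rw [hxval, if_neg (by simp [Fin.ext_iff]), if_neg (by simp [Fin.ext_iff]), mul_one]
  have hcs0 : ((0 : Fin (e+2)).castSucc) = (0 : Fin (e+2+1)) := by simp [Fin.ext_iff]
  have hs0 : ((0 : Fin (e+2)).succ) = (1 : Fin (e+2+1)) := by simp [Fin.ext_iff]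
  have hcs1 : (((0 : Fin (e+1)).succ : Fin (e+2)).castSucc) = (1 : Fin (e+2+1)) := by
    simp [Fin.ext_iff]
  have hxs1 : x (((0 : Fin (e+1)).succ : Fin (e+2)).succ) = 1 := by
    rw [hxval, if_neg (by simp [Fin.ext_iff, Nat.mod_eq_of_lt (show 2 < e+2+1 by omega)]),
      if_neg (by simp [Fin.ext_iff, Nat.mod_eq_of_lt (show 2 < e+2+1 by omega)]), mul_one]
  rw [hcs0, hs0, hcs1, hx0, hx1, hxs1, hxlast]
  have p1 : ∏ j ∈ Finset.univ.erase (0 : Fin (e+2+1)), x j = c := by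
    rw [hprod, if_neg (by simp), if_pos (by simp [Finset.mem_erase, Ne.symm h01]), one_mul]
  have p2 : ∏ j ∈ (Finset.univ.erase (0 : Fin (e+2+1))).erase (1 : Fin (e+2+1)), x j = 1 := by
    rw [hprod, if_neg (by simp [Finset.mem_erase]), if_neg (by simp [Finset.mem_erase]), one_mul]
  have p3 : ∏ j ∈ (Finset.univ.erase (1 : Fin (e+2+1))).erase
      (((0 : Fin (e+1)).succ : Fin (e+2)).succ), x j = b := by
    rw [hprod, if_pos (by simp [Finset.mem_erase, Fin.ext_iff, h01,
        Nat.mod_eq_of_lt (show 2 < e+2+1 by omega)]),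
      if_neg (by simp [Finset.mem_erase]), mul_one]
  have p4 : ∏ j ∈ Finset.univ.erase (Fin.last (e+2)), x j = b * c := by
    rw [hprod, if_pos (by simp [Finset.mem_erase, Fin.ext_iff]),
      if_pos (by simp [Finset.mem_erase, Fin.ext_iff])]
  rw [p1, p2, p3, p4]
  have hsgn1 : ((-1:A)) ^ (((0 : Fin (e+2)) : ℕ) + 1) = -1 := by norm_num
  have hsgn2 : ((-1:A)) ^ ((((0 : Fin (e+1)).succ : Fin (e+2)) : ℕ) + 1) = 1 := by
    norm_num [Fin.val_succ]
  have hsgn3 : ((-1:A)) ^ (e + 2 + 1) = -1 := Odd.neg_one_pow (by rcases heven with ⟨t, ht⟩; exact ⟨t+1, by omega⟩)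
  rw [hsgn1, hsgn2, hsgn3]
  simp only [Algebra.TensorProduct.tmul_mul_tmul, sub_mul, mul_sub, neg_one_mul, one_mul, mul_one,
    TensorProduct.neg_tmul, neg_sub, neg_neg, neg_one_smul]
  abel

end StmtAux

/-- Let `k` be a field, `A` a commutative `k`-algebra and `d ≥ 2` even.
Let `μ : A ⊗[k] A → A` be the multiplication map (an `A`-linear map for the `A`-module
structure on the first tensor factor) and let `dd` be the `(d+1)`-st differential of the
higher Hochschild complex of the `d`-sphere (the unique `k`-linear map
`A^{⊗(d+2)} → A ⊗[k] A` satisfying the explicit formula below on pure tensors).  Then the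
image of `dd` is contained in `ker μ`, and the quotient `(ker μ)/(im dd)` is isomorphic as
an `A`-module to `Ω¹_{A/k}`, via the map induced by `Σ aᵢ ⊗ bᵢ ↦ Σ aᵢ • d bᵢ`. -/
theorem stmt_1 (k : Type*) [Field k] (A : Type*) [CommRing A] [Algebra k A]
    (d : ℕ) (hd : 2 ≤ d) (heven : Even d)
    (μ : A ⊗[k] A →ₗ[A] A) (hμ : ∀ a b : A, μ (a ⊗ₜ[k] b) = a * b)
    (dd : PiTensorProduct k (fun _ : Fin (d + 2) => A) →ₗ[k] A ⊗[k] A)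
    (hdd : ∀ (a : A) (x : Fin (d + 1) → A),
      dd (PiTensorProduct.tprod k (Fin.cons a x)) =
        (a * ∏ j ∈ Finset.univ.erase 0, x j) ⊗ₜ[k] x 0 +
        ∑ i : Fin d,
          ((-1 : A) ^ ((i : ℕ) + 1) *
              (a * ∏ j ∈ (Finset.univ.erase i.castSucc).erase i.succ, x j)) ⊗ₜ[k]
            (x i.castSucc * x i.succ) +
        ((-1 : A) ^ (d + 1) * (a * ∏ j ∈ Finset.univ.erase (Fin.last d), x j)) ⊗ₜ[k]
          x (Fin.last d)) :
    (∀ v ∈ Set.range dd, μ v = 0) ∧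
    ∃ e : (↥(LinearMap.ker μ) ⧸
            (Submodule.span A (Set.range dd)).comap (LinearMap.ker μ).subtype) ≃ₗ[A]
          KaehlerDifferential k A,
      ∀ (n : ℕ) (a b : Fin n → A) (h : (∑ i, a i ⊗ₜ[k] b i) ∈ LinearMap.ker μ),
        e (Submodule.Quotient.mk ⟨∑ i, a i ⊗ₜ[k] b i, h⟩) =
          ∑ i, a i • KaehlerDifferential.D k A (b i) := by
  set D := KaehlerDifferential.D k A with hD
  set T := D.tensorProductTo with hT
  -- μ and dd composition vanishes
  have hμdd : ∀ y, μ (dd y) = 0 := by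
    intro y
    induction y using PiTensorProduct.induction_on with
    | smul_tprod r f =>
        rw [map_smul, LinearMap.map_smul_of_tower, ← Fin.cons_self_tail f,
          aux_mu_dd d heven μ hμ (f 0) (Fin.tail f) _ (hdd (f 0) (Fin.tail f)), smul_zero]
    | add u v hu hv => rw [map_add, map_add, hu, hv, add_zero]
  have hTdd : ∀ y, T (dd y) = 0 := by
    intro y
    induction y using PiTensorProduct.induction_on with
    | smul_tprod r f =>
        rw [map_smul, LinearMap.map_smul_of_tower, ← Fin.cons_self_tail f,
          aux_T_dd d heven (f 0) (Fin.tail f) _ (hdd (f 0) (Fin.tail f)), smul_zero]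
    | add u v hu hv => rw [map_add, map_add, hu, hv, add_zero]
  refine ⟨by rintro _ ⟨y, rfl⟩; exact hμdd y, ?_⟩
  -- μ agrees with lmul'
  have hμeq : ∀ x : A ⊗[k] A, μ x = Algebra.TensorProduct.lmul' (S := A) k x := by
    intro x
    induction x using TensorProduct.induction_on with
    | zero => simp
    | tmul a b => rw [hμ, Algebra.TensorProduct.lmul'_apply_tmul]
    | add u v hu hv => rw [map_add, map_add, hu, hv]
  have hIker : ∀ x : A ⊗[k] A, μ x = 0 ↔ x ∈ KaehlerDifferential.ideal k A := by
    intro x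
    rw [hμeq, KaehlerDifferential.ideal, RingHom.mem_ker]
  -- the square of the ideal is inside the span of the range of dd
  have hδdd : ∀ b c : A,
      ((1:A) ⊗ₜ[k] b - b ⊗ₜ[k] (1:A)) * ((1:A) ⊗ₜ[k] c - c ⊗ₜ[k] (1:A)) ∈
        Submodule.span A (Set.range dd) := by
    intro b c
    obtain ⟨e, rfl⟩ : ∃ e, d = e + 2 := ⟨d - 2, by omega⟩
    have he : Even e := by rcases heven with ⟨t, ht⟩; exact ⟨t - 1, by omega⟩
    have key := aux_dd_delta e he b c
      (fun j => if j = 0 then b else if j = 1 then c else 1) rfl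
      (dd (PiTensorProduct.tprod k
        (Fin.cons 1 (fun j => if j = 0 then b else if j = 1 then c else 1))))
      (hdd 1 _)
    rw [← neg_neg (((1:A) ⊗ₜ[k] b - b ⊗ₜ[k] (1:A)) * ((1:A) ⊗ₜ[k] c - c ⊗ₜ[k] (1:A))), ← key]
    exact Submodule.neg_mem _ (Submodule.subset_span ⟨_, rfl⟩)
  have hsq : ∀ x ∈ (KaehlerDifferential.ideal k A) ^ 2, x ∈ Submodule.span A (Set.range dd) := by
    intro x hx
    rw [pow_two] at hx
    refine Submodule.mul_induction_on hx ?_ (fun u v hu hv => Submodule.add_mem _ hu hv)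
    intro m hm n hn
    have hm' : m ∈ Submodule.span A (Set.range fun b : A => (1:A) ⊗ₜ[k] b - b ⊗ₜ[k] (1:A)) :=
      aux_ker_le_span μ hμ m ((hIker m).mpr hm)
    have hn' : n ∈ Submodule.span A (Set.range fun b : A => (1:A) ⊗ₜ[k] b - b ⊗ₜ[k] (1:A)) :=
      aux_ker_le_span μ hμ n ((hIker n).mpr hn)
    clear hm hn hx
    induction hm' using Submodule.span_induction with
    | mem m hmem =>
        obtain ⟨b, rfl⟩ := hmem
        induction hn' using Submodule.span_induction with
        | mem n hnmem =>
            obtain ⟨c, rfl⟩ := hnmem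
            exact hδdd b c
        | zero => rw [mul_zero]; exact Submodule.zero_mem _
        | add u v _ _ hu hv => rw [mul_add]; exact Submodule.add_mem _ hu hv
        | smul a u _ hu => rw [mul_smul_comm]; exact Submodule.smul_mem _ _ hu
    | zero => rw [zero_mul]; exact Submodule.zero_mem _
    | add u v _ _ hu hv => rw [add_mul]; exact Submodule.add_mem _ hu hv
    | smul a u _ hu => rw [smul_mul_assoc]; exact Submodule.smul_mem _ _ hu
  -- the A-linear map from ker μ to Ω
  set φ : (LinearMap.ker μ) →ₗ[A] KaehlerDifferential k A :=
    T ∘ₗ (LinearMap.ker μ).subtype with hφ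
  have hφ_apply : ∀ y : LinearMap.ker μ, φ y = T (y : A ⊗[k] A) := fun _ => rfl
  have hδker : ∀ b : A, (1:A) ⊗ₜ[k] b - b ⊗ₜ[k] (1:A) ∈ LinearMap.ker μ := by
    intro b
    rw [LinearMap.mem_ker, map_sub, hμ, hμ, one_mul, mul_one, sub_self]
  have hφδ : ∀ b : A, φ ⟨_, hδker b⟩ = D b := by
    intro b
    rw [hφ_apply]
    show T ((1:A) ⊗ₜ[k] b - b ⊗ₜ[k] (1:A)) = D b
    rw [map_sub, hT, Derivation.tensorProductTo_tmul, Derivation.tensorProductTo_tmul,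
      one_smul, Derivation.map_one_eq_zero, smul_zero, sub_zero]
  have hφ_surj : Function.Surjective φ := by
    rw [← LinearMap.range_eq_top, eq_top_iff, ← KaehlerDifferential.span_range_derivation,
      Submodule.span_le]
    rintro _ ⟨b, rfl⟩
    exact ⟨⟨_, hδker b⟩, hφδ b⟩
  -- identify the kernel of φ
  have hker_eq : (Submodule.span A (Set.range dd)).comap (LinearMap.ker μ).subtype
      = LinearMap.ker φ := by
    ext y
    obtain ⟨x, hx⟩ := y
    simp only [Submodule.mem_comap, Submodule.coe_subtype, LinearMap.mem_ker, hφ_apply]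
    constructor
    · intro hmem
      have : Submodule.span A (Set.range dd) ≤ LinearMap.ker T := by
        rw [Submodule.span_le]
        rintro _ ⟨y, rfl⟩
        exact hTdd y
      exact this hmem
    · intro hTx
      have hxI : x ∈ KaehlerDifferential.ideal k A := (hIker x).mp hx
      have h2 : (KaehlerDifferential.ideal k A).toCotangent ⟨x, hxI⟩ = 0 := by
        rw [← KaehlerDifferential.D_tensorProductTo ⟨x, hxI⟩]
        exact hTx
      exact hsq x ((Ideal.toCotangent_eq_zero _ _).mp h2)
  -- construct the equivalence
  have hle : (Submodule.span A (Set.range dd)).comap (LinearMap.ker μ).subtype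
      ≤ LinearMap.ker φ := le_of_eq hker_eq
  set f := Submodule.liftQ _ φ hle with hf
  have hf_inj : Function.Injective f := by
    rw [← LinearMap.ker_eq_bot]
    exact Submodule.ker_liftQ_eq_bot _ _ _ (ge_of_eq hker_eq)
  have hf_surj : Function.Surjective f := by
    intro ω
    obtain ⟨y, hy⟩ := hφ_surj ω
    exact ⟨Submodule.Quotient.mk y, by rw [hf, Submodule.liftQ_apply, hy]⟩
  refine ⟨LinearEquiv.ofBijective f (show Function.Bijective f from ⟨hf_inj, hf_surj⟩), ?_⟩
  intro n a b h
  rw [LinearEquiv.ofBijective_apply, hf, Submodule.liftQ_apply, hφ_apply]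
  show T (∑ i, a i ⊗ₜ[k] b i) = _
  rw [map_sum]
  exact Finset.sum_congr rfl fun i _ => Derivation.tensorProductTo_tmul _ _ _
end

section
/- Let k be a field, A a commutative k-algebra, and s ∈ A such that the canonical localization map A → A_s is not surjective. Let X = S ∪_U S be the scheme obtained by gluing two copies of S = Spec A along the open subscheme U = D(s) via the identity. Then X is not a separated scheme (i.e., the diagonal morphism X → X × X over Spec k is not a closed immersion). -/
open CategoryTheory CategoryTheory.Limits AlgebraicGeometry

noncomputable section Stmt6Aux

namespace Stmt6

variable (A : Type) [CommRing A] (s : A)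

/-- The localization open immersion `Spec A_s ⟶ Spec A`. -/
abbrev locMap : Spec (CommRingCat.of (Localization.Away s)) ⟶ Spec (CommRingCat.of A) :=
  Spec.map (CommRingCat.ofHom (algebraMap A (Localization.Away s)))

/-- Gluing two copies of `Spec A` along `D(s)`. -/
def gd : Scheme.GlueData where
  J := Bool
  U _ := Spec (CommRingCat.of A)
  V p := match p with
    | (false, false) => Spec (CommRingCat.of A)
    | (true, true) => Spec (CommRingCat.of A)
    | (false, true) => Spec (CommRingCat.of (Localization.Away s))
    | (true, false) => Spec (CommRingCat.of (Localization.Away s))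
  f i j := match i, j with
    | false, false => 𝟙 _
    | true, true => 𝟙 _
    | false, true => locMap A s
    | true, false => locMap A s
  f_mono i j := by cases i <;> cases j <;> infer_instance
  f_hasPullback _ _ _ := inferInstance
  f_id i := by cases i <;> dsimp <;> infer_instance
  t i j := match i, j with
    | false, false => 𝟙 _
    | true, true => 𝟙 _
    | false, true => 𝟙 _
    | true, false => 𝟙 _
  t_id i := by cases i <;> rfl
  t' i j k := match i, j, k with
    | false, false, false => 𝟙 _
    | true, true, true => 𝟙 _
    | false, false, true => (pullbackSymmetry _ _).hom
    | true, true, false => (pullbackSymmetry _ _).hom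
    | false, true, false =>
        pullback.lift (pullback.fst (locMap A s) (𝟙 _)) (pullback.fst (locMap A s) (𝟙 _)) rfl
    | true, false, true =>
        pullback.lift (pullback.fst (locMap A s) (𝟙 _)) (pullback.fst (locMap A s) (𝟙 _)) rfl
    | false, true, true =>
        pullback.lift (pullback.fst (locMap A s) (locMap A s) ≫ locMap A s)
          (pullback.fst (locMap A s) (locMap A s)) (by simp)
    | true, false, false =>
        pullback.lift (pullback.fst (locMap A s) (locMap A s) ≫ locMap A s)
          (pullback.fst (locMap A s) (locMap A s)) (by simp)
  t_fac i j k := by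
    cases i <;> cases j <;> cases k <;>
      simp [fst_eq_snd_of_mono_eq] <;> erw [pullback.lift_snd]
  cocycle i j k := by
    cases i <;> cases j <;> cases k <;>
      (apply pullback.hom_ext <;>
        simp only [Category.assoc] <;>
        (repeat' (first | erw [pullback.lift_fst] | erw [pullback.lift_snd] | erw [pullback.lift_fst_assoc] | erw [pullback.lift_snd_assoc] | erw [pullbackSymmetry_hom_comp_fst_assoc] | erw [pullbackSymmetry_hom_comp_snd_assoc] | erw [pullbackSymmetry_hom_comp_fst] | erw [pullbackSymmetry_hom_comp_snd])) <;>
        simp [fst_eq_snd_of_mono_eq, pullback.condition, ← pullback.condition_assoc])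
    all_goals exact (pullback.condition).symm.trans (Category.comp_id _)
  f_open i j := by cases i <;> cases j <;> dsimp <;> infer_instance

/-- The model square is a pullback. -/
lemma model_isPullback :
    IsPullback (locMap A s) (locMap A s) ((gd A s).ι false) ((gd A s).ι true) := by
  have h := IsPullback.of_isLimit ((gd A s).vPullbackConeIsLimit false true)
  refine IsPullback.of_iso h (Iso.refl _) (Iso.refl _) (Iso.refl _) (Iso.refl _) ?_ ?_ ?_ ?_ <;>
    simp [Scheme.GlueData.vPullbackCone] <;> rfl

/-- Any pushout square of the two copies of `Spec A` along `D(s)` is also a pullback. -/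
lemma isPullback_of_isPushout {X : Scheme} {i₁ i₂ : Spec (CommRingCat.of A) ⟶ X}
    (h : IsPushout (locMap A s) (locMap A s) i₁ i₂) :
    IsPullback (locMap A s) (locMap A s) i₁ i₂ := by
  have m := model_isPullback A s
  let φ : X ⟶ (gd A s).glued := h.desc ((gd A s).ι false) ((gd A s).ι true) m.w
  have h1 : i₁ ≫ φ = (gd A s).ι false := h.inl_desc _ _ _
  have h2 : i₂ ≫ φ = (gd A s).ι true := h.inr_desc _ _ _
  refine { w := h.w, isLimit' := ⟨PullbackCone.IsLimit.mk h.w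
    (fun sc => m.lift sc.fst sc.snd ?_) (fun sc => ?_) (fun sc => ?_) (fun sc u hu₁ hu₂ => ?_) ⟩ }
  · rw [← h1, ← h2, ← Category.assoc, ← Category.assoc, sc.condition]
  · exact m.lift_fst _ _ _
  · exact m.lift_snd _ _ _
  · have : Mono (locMap A s) := inferInstance
    rw [← cancel_mono (locMap A s)]
    rw [hu₁, m.lift_fst]

end Stmt6

end Stmt6Aux

/-- Let `k` be a field, `A` a commutative `k`-algebra and `s ∈ A` such that
the localization map `A → A_s` is not surjective.  Let `X` be the scheme obtained by gluing
two copies of `S = Spec A` along the open subscheme `U = D(s) ≅ Spec A_s` via the identity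
(i.e. `X` is a pushout of `S ⟵ Spec A_s ⟶ S`).  Then `X` is not separated over `Spec k`:
the diagonal morphism `X ⟶ X ×_{Spec k} X` is not a closed immersion. -/
theorem stmt_6 (k : Type) [Field k] (A : Type) [CommRing A] [Algebra k A] (s : A)
    (hs : ¬ Function.Surjective (algebraMap A (Localization.Away s)))
    (X : Scheme) (i₁ i₂ : Spec (CommRingCat.of A) ⟶ X)
    (h : IsPushout
      (Spec.map (CommRingCat.ofHom (algebraMap A (Localization.Away s))))
      (Spec.map (CommRingCat.ofHom (algebraMap A (Localization.Away s))))
      i₁ i₂) :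
    ¬ IsClosedImmersion
        (pullback.diagonal
          (h.desc (Spec.map (CommRingCat.ofHom (algebraMap k A)))
            (Spec.map (CommRingCat.ofHom (algebraMap k A))) rfl)) := by
  intro hcl
  set p : X ⟶ Spec (CommRingCat.of k) :=
    h.desc (Spec.map (CommRingCat.ofHom (algebraMap k A)))
      (Spec.map (CommRingCat.ofHom (algebraMap k A))) rfl with hp
  have hsep : IsSeparated p := ⟨hcl⟩
  have hpb : IsPullback (Stmt6.locMap A s) (Stmt6.locMap A s) i₁ i₂ :=
    Stmt6.isPullback_of_isPushout A s h
  have e1 : i₁ ≫ p = Spec.map (CommRingCat.ofHom (algebraMap k A)) := h.inl_desc _ _ _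
  have e2 : i₂ ≫ p = Spec.map (CommRingCat.ofHom (algebraMap k A)) := h.inr_desc _ _ _
  -- the ring hom `A ⊗[k] A → A_s`
  set ψ : CommRingCat.of (TensorProduct k A A) ⟶ CommRingCat.of (Localization.Away s) :=
    CommRingCat.ofHom ((algebraMap A (Localization.Away s)).comp
      (Algebra.TensorProduct.lmul' k (S := A)).toRingHom) with hψ
  have key' : Spec.map ψ ≫ (pullbackSpecIso k A A).inv =
      hpb.isoPullback.hom ≫ pullback.mapDesc i₁ i₂ p ≫ (pullback.congrHom e1 e2).hom := by
    apply pullback.hom_ext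
    · simp only [Category.assoc, pullbackSpecIso_inv_fst, ← Spec.map_comp]
      rw [pullback.congrHom_hom]
      simp only [Category.assoc, pullback.lift_fst, Category.comp_id,
        IsPullback.isoPullback_hom_fst]
      congr 1
      ext a
      show algebraMap A (Localization.Away s) (Algebra.TensorProduct.lmul' k (a ⊗ₜ[k] 1)) = _
      rw [Algebra.TensorProduct.lmul'_apply_tmul, mul_one]
      rfl
    · simp only [Category.assoc, pullbackSpecIso_inv_snd, ← Spec.map_comp]
      rw [pullback.congrHom_hom]
      simp only [Category.assoc, pullback.lift_snd, Category.comp_id,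
        IsPullback.isoPullback_hom_snd]
      congr 1
      ext a
      show algebraMap A (Localization.Away s) (Algebra.TensorProduct.lmul' k ((1:A) ⊗ₜ[k] a)) = _
      rw [Algebra.TensorProduct.lmul'_apply_tmul, one_mul]
      rfl
  have key : Spec.map ψ =
      (hpb.isoPullback.hom ≫ pullback.mapDesc i₁ i₂ p ≫ (pullback.congrHom e1 e2).hom) ≫
        (pullbackSpecIso k A A).hom := by
    rw [← key', Category.assoc, Iso.inv_hom_id, Category.comp_id]
  have hci : IsClosedImmersion (Spec.map ψ) := by
    rw [key]
    rw [MorphismProperty.cancel_right_of_respectsIso @IsClosedImmersion]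
    rw [MorphismProperty.cancel_left_of_respectsIso @IsClosedImmersion]
    rw [MorphismProperty.cancel_right_of_respectsIso @IsClosedImmersion]
    infer_instance
  have hsurj : Function.Surjective ((Spec.map ψ).appTop) :=
    (IsClosedImmersion.isAffine_surjective_of_isAffine _).2
  have heq : (Scheme.ΓSpecIso (CommRingCat.of (TensorProduct k A A))).inv ≫
      (Spec.map ψ).appTop ≫ (Scheme.ΓSpecIso (CommRingCat.of (Localization.Away s))).hom = ψ := by
    rw [Scheme.ΓSpecIso_naturality, Iso.inv_hom_id_assoc]
  have hψs : Function.Surjective ψ := by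
    rw [← heq]
    show Function.Surjective (⇑(Scheme.ΓSpecIso (CommRingCat.of (Localization.Away s))).hom ∘
      ⇑(Spec.map ψ).appTop ∘ ⇑(Scheme.ΓSpecIso (CommRingCat.of (TensorProduct k A A))).inv)
    have s1 : Function.Surjective
        ⇑(Scheme.ΓSpecIso (CommRingCat.of (Localization.Away s))).hom :=
      (ConcreteCategory.bijective_of_isIso _).surjective
    have s2 : Function.Surjective
        ⇑(Scheme.ΓSpecIso (CommRingCat.of (TensorProduct k A A))).inv :=
      (ConcreteCategory.bijective_of_isIso _).surjective
    exact s1.comp (hsurj.comp s2)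
  refine hs ?_
  intro x
  obtain ⟨t, ht⟩ := hψs x
  exact ⟨Algebra.TensorProduct.lmul' k (S := A) t, ht⟩
end
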